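/- Let Δ_L ∈ ℝ^{N×m} be the matrix with entries (Δ_L)_{ij} = l_1'(f_j(x_i) − y_{ij})·s_{ij} if x_i ∈ C_j and l_2'(f_j(x_i) − y_{ij})·s_{ij} if x_i ∉ C_j, where all s_{ij} > 0, l_1' ≤ 0 everywhere with l_1'(a) = 0 iff a ≥ 0, and l_2' ≥ 0 everywhere with l_2'(a) = 0 iff a ≤ 0. Let M ∈ ℝ^{m×N} satisfy M_{ji} > 0 if x_i ∈ C_j and M_{ji} < 0 if x_i ∉ C_j. Then M Δ_L = 0 implies Δ_L = 0. -/
import Mathlib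


open Matrix

/-- Let `Δ_L` have entries `d₁(A_{ij})·s_{ij}` when sample `i` belongs to class `j`
and `d₂(A_{ij})·s_{ij}` otherwise, with `s_{ij} > 0`, `d₁ ≤ 0` vanishing exactly on
`[0,∞)`, `d₂ ≥ 0` vanishing exactly on `(-∞,0]`. If `M` satisfies `M_{ji} > 0` when
`i ∈ C_j` and `M_{ji} < 0` otherwise, then `M Δ_L = 0` implies `Δ_L = 0`. -/
theorem stmt_16 (N m : ℕ) (cl : Fin N → Fin m)
    (d₁ d₂ : ℝ → ℝ)
    (hd₁ : ∀ a : ℝ, d₁ a ≤ 0) (hd₁z : ∀ a : ℝ, d₁ a = 0 ↔ 0 ≤ a)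
    (hd₂ : ∀ a : ℝ, 0 ≤ d₂ a) (hd₂z : ∀ a : ℝ, d₂ a = 0 ↔ a ≤ 0)
    (A : Matrix (Fin N) (Fin m) ℝ)
    (s : Matrix (Fin N) (Fin m) ℝ) (hs : ∀ i j, 0 < s i j)
    (Δ : Matrix (Fin N) (Fin m) ℝ)
    (hΔ : ∀ i j, Δ i j = (if cl i = j then d₁ (A i j) else d₂ (A i j)) * s i j)
    (M : Matrix (Fin m) (Fin N) ℝ)
    (hM : ∀ (j : Fin m) (i : Fin N), if cl i = j then 0 < M j i else M j i < 0)
    (h : M * Δ = 0) :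
    Δ = 0 := by
  ext i j
  -- each summand of (M * Δ) j j is ≤ 0
  have hterm : ∀ k : Fin N, M j k * Δ k j ≤ 0 := by
    intro k
    have hMk := hM j k
    rw [hΔ k j]
    by_cases hc : cl k = j
    · simp only [hc, if_pos rfl] at hMk ⊢
      exact mul_nonpos_of_nonneg_of_nonpos hMk.le
        (mul_nonpos_of_nonpos_of_nonneg (hd₁ _) (hs k j).le)
    · simp only [hc, if_neg hc] at hMk ⊢
      exact mul_nonpos_of_nonpos_of_nonneg hMk.le
        (mul_nonneg (hd₂ _) (hs k j).le)
  have hsum : ∑ k, M j k * Δ k j = 0 := by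
    have := congrFun (congrFun h j) j
    simpa [Matrix.mul_apply] using this
  have hzero : M j i * Δ i j = 0 :=
    (Finset.sum_eq_zero_iff_of_nonpos (fun k _ => hterm k)).mp hsum i (Finset.mem_univ i)
  have hMne : M j i ≠ 0 := by
    have := hM j i
    by_cases hc : cl i = j
    · rw [if_pos hc] at this; exact ne_of_gt this
    · rw [if_neg hc] at this; exact ne_of_lt this
  have : Δ i j = 0 := by
    rcases mul_eq_zero.mp hzero with h' | h'
    · exact absurd h' hMne
    · exact h'
  simpa using this
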